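/- For every real number λ > 0, the number N(λ) of pairs (i,j) of natural numbers (including 0) with i² + j² < λ satisfies πλ/4 < N(λ) ≤ πλ/4 + 2⌊√λ⌋ + 1. -/

import Mathlib

open Real

private lemma quarter_int01 : ∫ x in (0:ℝ)..1, Real.sqrt (1 - x ^ 2) = π / 4 := by
  have hc : Continuous fun x : ℝ => Real.sqrt (1 - x ^ 2) :=
    Real.continuous_sqrt.comp (by continuity)
  have h1 : (∫ x in (0:ℝ)..1, Real.sqrt (1 - x ^ 2))
      = ∫ x in (-1:ℝ)..0, Real.sqrt (1 - x ^ 2) := by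
    have h := intervalIntegral.integral_comp_neg (a := (0:ℝ)) (b := 1)
      (fun x => Real.sqrt (1 - x ^ 2))
    simpa using h
  have h2 : (∫ x in (-1:ℝ)..0, Real.sqrt (1 - x ^ 2))
      + (∫ x in (0:ℝ)..1, Real.sqrt (1 - x ^ 2)) = π / 2 := by
    rw [intervalIntegral.integral_add_adjacent_intervals
      (hc.intervalIntegrable _ _) (hc.intervalIntegrable _ _)]
    exact integral_sqrt_one_sub_sq
  linarith

private lemma quarter_int (lam : ℝ) (hlam : 0 < lam) :
    ∫ x in (0:ℝ)..Real.sqrt lam, Real.sqrt (lam - x ^ 2) = π * lam / 4 := by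
  have hs : Real.sqrt lam ≠ 0 := ne_of_gt (Real.sqrt_pos.2 hlam)
  have h := intervalIntegral.integral_comp_mul_right (a := (0:ℝ)) (b := 1)
    (fun x => Real.sqrt (lam - x ^ 2)) hs
  rw [zero_mul, one_mul] at h
  have heq : ∀ x : ℝ, Real.sqrt (lam - (x * Real.sqrt lam) ^ 2)
      = Real.sqrt lam * Real.sqrt (1 - x ^ 2) := by
    intro x
    rw [mul_pow, Real.sq_sqrt hlam.le, show lam - x ^ 2 * lam = lam * (1 - x ^ 2) by ring,
      Real.sqrt_mul hlam.le]
  simp only [heq] at h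
  rw [intervalIntegral.integral_const_mul, quarter_int01] at h
  have hsq : Real.sqrt lam * Real.sqrt lam = lam := Real.mul_self_sqrt hlam.le
  rw [smul_eq_mul] at h
  have h3 := congrArg (fun t => Real.sqrt lam * t) h
  simp only [← mul_assoc, mul_inv_cancel₀ hs, one_mul] at h3
  rw [← h3]
  rw [hsq]; ring

theorem stmt_6 (lam : ℝ) (hlam : 0 < lam) :
    π * lam / 4 <
      (({p : ℕ × ℕ | (p.1 : ℝ) ^ 2 + (p.2 : ℝ) ^ 2 < lam}.ncard : ℝ)) ∧
    (({p : ℕ × ℕ | (p.1 : ℝ) ^ 2 + (p.2 : ℝ) ^ 2 < lam}.ncard : ℝ)) ≤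
      π * lam / 4 + 2 * (⌊Real.sqrt lam⌋ : ℝ) + 1 := by
  classical
  set f : ℝ → ℝ := fun x => Real.sqrt (lam - x ^ 2) with hfdef
  have hc : Continuous f := Real.continuous_sqrt.comp (by continuity)
  have hnonneg : ∀ x, 0 ≤ f x := fun x => Real.sqrt_nonneg _
  have hanti : ∀ B : ℝ, AntitoneOn f (Set.Icc 0 B) := by
    intro B x hx y hy hxy
    apply Real.sqrt_le_sqrt
    nlinarith [hx.1]
  set n : ℕ := ⌈Real.sqrt lam⌉₊ with hn
  have hn1 : 1 ≤ n := Nat.one_le_iff_ne_zero.2 (by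
    simp [hn, Nat.ceil_eq_zero, not_le, Real.sqrt_pos.2 hlam])
  set c : ℕ → ℕ := fun i => ⌈f i⌉₊ with hcdef
  -- membership characterization
  have hmem : ∀ p : ℕ × ℕ, ((p.1:ℝ)^2 + (p.2:ℝ)^2 < lam) ↔ (p.1 < n ∧ p.2 < c p.1) := by
    rintro ⟨i, j⟩
    simp only [hcdef, hn]
    constructor
    · intro h
      refine ⟨Nat.lt_ceil.2 ?_, Nat.lt_ceil.2 ?_⟩
      · exact (Real.lt_sqrt (i.cast_nonneg)).2 (by nlinarith [sq_nonneg (j:ℝ)])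
      · exact (Real.lt_sqrt (j.cast_nonneg)).2 (by simpa [hfdef] using (by linarith : (j:ℝ)^2 < lam - (i:ℝ)^2))
    · rintro ⟨hi, hj⟩
      rw [Nat.lt_ceil] at hj
      have := (Real.lt_sqrt (j.cast_nonneg)).1 hj
      linarith
  -- the set as a finset
  set T : Finset (ℕ × ℕ) := (Finset.range n).biUnion
      (fun i => (Finset.range (c i)).image (fun j => (i, j))) with hT
  have hTmem : ∀ p : ℕ × ℕ, p ∈ T ↔ p.1 < n ∧ p.2 < c p.1 := by
    rintro ⟨i, j⟩
    simp only [hT, Finset.mem_biUnion, Finset.mem_image, Finset.mem_range]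
    constructor
    · rintro ⟨a, ha, b, hb, h⟩
      simp only [Prod.mk.injEq] at h
      obtain ⟨rfl, rfl⟩ := h
      exact ⟨ha, hb⟩
    · rintro ⟨hi, hj⟩
      exact ⟨i, hi, j, hj, rfl⟩
  have hset : {p : ℕ × ℕ | (p.1 : ℝ) ^ 2 + (p.2 : ℝ) ^ 2 < lam} = ↑T := by
    ext p
    simp only [Set.mem_setOf_eq, Finset.coe_sort_coe, Finset.mem_coe, hTmem p, hmem p]
  have hcard : T.card = ∑ i ∈ Finset.range n, c i := by
    rw [hT, Finset.card_biUnion]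
    · refine Finset.sum_congr rfl fun i _ => ?_
      rw [Finset.card_image_of_injective _ (fun a b h => by simpa using congrArg Prod.snd h),
        Finset.card_range]
    · intro i hi j hj hij
      simp only [Finset.disjoint_left, Finset.mem_image, Finset.mem_range]
      rintro ⟨a, b⟩ ⟨x, hx, hx2⟩ ⟨y, hy, hy2⟩
      simp only [Prod.mk.injEq] at hx2 hy2
      exact absurd (hx2.1.trans hy2.1.symm) hij
  have hncard : ({p : ℕ × ℕ | (p.1 : ℝ) ^ 2 + (p.2 : ℝ) ^ 2 < lam}.ncard : ℝ)
      = ∑ i ∈ Finset.range n, (c i : ℝ) := by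
    rw [hset, Set.ncard_coe_finset, hcard]
    push_cast
    rfl
  -- basic facts
  have hfle : ∀ i : ℕ, f i ≤ c i := fun i => Nat.le_ceil _
  have hclt : ∀ i : ℕ, (c i : ℝ) < f i + 1 := fun i => Nat.ceil_lt_add_one (hnonneg _)
  have hint : ∫ x in (0:ℝ)..Real.sqrt lam, f x = π * lam / 4 := quarter_int lam hlam
  have hslam_n : Real.sqrt lam ≤ (n:ℝ) := Nat.le_ceil _
  have h1n : (1:ℝ) ≤ (n:ℝ) := by exact_mod_cast hn1
  have hslam_nonneg : (0:ℝ) ≤ Real.sqrt lam := Real.sqrt_nonneg _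
  have hcast : ((n - 1 : ℕ) : ℝ) = (n : ℝ) - 1 := by
    push_cast [hn1]; ring
  have hn1lt : ((n - 1 : ℕ) : ℝ) < Real.sqrt lam := Nat.lt_ceil.1 (by omega)
  -- integrals splits
  have hI_0n : (∫ x in (0:ℝ)..1, f x) + (∫ x in (1:ℝ)..(n:ℝ), f x) = ∫ x in (0:ℝ)..(n:ℝ), f x :=
    intervalIntegral.integral_add_adjacent_intervals (hc.intervalIntegrable _ _)
      (hc.intervalIntegrable _ _)
  have hI_ge : π * lam / 4 ≤ ∫ x in (0:ℝ)..(n:ℝ), f x := by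
    have hadd : (∫ x in (0:ℝ)..Real.sqrt lam, f x) + (∫ x in Real.sqrt lam..(n:ℝ), f x)
        = ∫ x in (0:ℝ)..(n:ℝ), f x :=
      intervalIntegral.integral_add_adjacent_intervals (hc.intervalIntegrable _ _)
        (hc.intervalIntegrable _ _)
    have hpos : 0 ≤ ∫ x in Real.sqrt lam..(n:ℝ), f x :=
      intervalIntegral.integral_nonneg hslam_n (fun x _ => hnonneg x)
    linarith [hint]
  have h01 : ∫ x in (0:ℝ)..1, f x < f 0 := by
    have hpos : 0 < ∫ x in (0:ℝ)..1, (f 0 - f x) := by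
      apply intervalIntegral.intervalIntegral_pos_of_pos_on
        ((continuous_const.sub hc).intervalIntegrable 0 1)
      · intro x hx
        have hx0 : 0 < x := hx.1
        have hf0 : f 0 = Real.sqrt lam := by simp [hfdef]
        have : f x < Real.sqrt lam := by
          show Real.sqrt (lam - x ^ 2) < Real.sqrt lam
          rcases le_or_gt (lam - x ^ 2) 0 with h | h
          · rw [Real.sqrt_eq_zero'.2 h]
            exact Real.sqrt_pos.2 hlam
          · exact Real.sqrt_lt_sqrt h.le (by nlinarith)
        show 0 < f 0 - f x
        linarith [hf0 ▸ this]
      · exact one_pos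
    have heq : (∫ x in (0:ℝ)..1, (f 0 - f x)) = f 0 - ∫ x in (0:ℝ)..1, f x := by
      rw [intervalIntegral.integral_sub (intervalIntegrable_const) (hc.intervalIntegrable _ _),
        intervalIntegral.integral_const]
      simp
    linarith
  -- sum/integral comparisons
  have hsum_lower : ∫ x in (1:ℝ)..(n:ℝ), f x ≤ ∑ i ∈ Finset.range (n-1), f (1 + (i:ℝ)) := by
    have h := AntitoneOn.integral_le_sum (x₀ := 1) (a := n-1) (f := f) ?_
    · rw [hcast, show (1:ℝ) + ((n:ℝ) - 1) = (n:ℝ) by ring] at h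
      exact h
    · rw [hcast, show (1:ℝ) + ((n:ℝ) - 1) = (n:ℝ) by ring]
      exact (hanti ((n:ℝ))).mono (Set.Icc_subset_Icc_left zero_le_one)
  have hsum_upper : ∑ i ∈ Finset.range (n-1), f ((i:ℝ) + 1) ≤ ∫ x in (0:ℝ)..((n:ℝ)-1), f x := by
    have h := AntitoneOn.sum_le_integral (x₀ := 0) (a := n-1) (f := f) ?_
    · rw [hcast] at h
      simp only [zero_add] at h
      push_cast at h
      exact h
    · rw [hcast, zero_add]
      exact hanti ((n:ℝ) - 1)
  have hI_le : ∫ x in (0:ℝ)..((n:ℝ)-1), f x ≤ π * lam / 4 := by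
    have hadd : (∫ x in (0:ℝ)..((n:ℝ)-1), f x) + (∫ x in ((n:ℝ)-1)..Real.sqrt lam, f x)
        = ∫ x in (0:ℝ)..Real.sqrt lam, f x :=
      intervalIntegral.integral_add_adjacent_intervals (hc.intervalIntegrable _ _)
        (hc.intervalIntegrable _ _)
    have hpos : 0 ≤ ∫ x in ((n:ℝ)-1)..Real.sqrt lam, f x :=
      intervalIntegral.integral_nonneg (by linarith [hcast ▸ hn1lt]) (fun x _ => hnonneg x)
    linarith [hint]
  -- sum decomposition
  have hdecomp : ∀ g : ℕ → ℝ, ∑ i ∈ Finset.range n, g i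
      = (∑ i ∈ Finset.range (n-1), g (i+1)) + g 0 := by
    intro g
    conv_lhs => rw [show n = (n-1)+1 by omega]
    exact Finset.sum_range_succ' g (n-1)
  have hfcast : ∀ i : ℕ, f ((i:ℕ)+1 : ℕ) = f ((i:ℝ)+1) := by
    intro i; norm_num
  -- n bounds vs floor
  have hfloor1 : Real.sqrt lam < (⌊Real.sqrt lam⌋ : ℝ) + 1 := Int.lt_floor_add_one _
  have hfloor0 : (0:ℝ) ≤ (⌊Real.sqrt lam⌋ : ℝ) := by
    exact_mod_cast Int.floor_nonneg.2 hslam_nonneg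
  have hnle : (n:ℝ) ≤ (⌊Real.sqrt lam⌋ : ℝ) + 1 := by
    have h1 : ((n:ℤ)) < ⌊Real.sqrt lam⌋ + 2 := by
      have : (n:ℝ) < (⌊Real.sqrt lam⌋:ℝ) + 2 := by
        rw [hcast] at hn1lt; linarith
      exact_mod_cast this
    have h2 : ((n:ℤ)) ≤ ⌊Real.sqrt lam⌋ + 1 := by omega
    exact_mod_cast h2
  constructor
  · -- lower bound
    rw [hncard]
    have hsum1 : ∑ i ∈ Finset.range n, f i ≤ ∑ i ∈ Finset.range n, (c i : ℝ) :=
      Finset.sum_le_sum (fun i _ => hfle i)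
    have hd1 := hdecomp (fun i => f i)
    push_cast at hd1
    calc π * lam / 4 ≤ ∫ x in (0:ℝ)..(n:ℝ), f x := hI_ge
      _ = (∫ x in (0:ℝ)..1, f x) + (∫ x in (1:ℝ)..(n:ℝ), f x) := hI_0n.symm
      _ < f 0 + ∑ i ∈ Finset.range (n-1), f (1 + (i:ℝ)) := by
          linarith [h01, hsum_lower]
      _ = ∑ i ∈ Finset.range n, f i := by
          have hcomm : ∑ i ∈ Finset.range (n-1), f (1 + (i:ℝ))
              = ∑ i ∈ Finset.range (n-1), f ((i:ℝ) + 1) :=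
            Finset.sum_congr rfl fun i _ => by rw [add_comm]
          rw [hcomm, hd1]
          ring
      _ ≤ ∑ i ∈ Finset.range n, (c i : ℝ) := hsum1
  · -- upper bound
    rw [hncard]
    have hd2 := hdecomp (fun i => (c i : ℝ))
    have hc0 : (c 0 : ℝ) = (n : ℝ) := by
      have : c 0 = n := by
        simp [hcdef, hfdef, hn]
      exact_mod_cast this
    have hstep : ∑ i ∈ Finset.range (n-1), (c (i+1) : ℝ)
        ≤ (∑ i ∈ Finset.range (n-1), f ((i:ℝ)+1)) + ((n:ℝ) - 1) := by
      have : ∑ i ∈ Finset.range (n-1), (c (i+1) : ℝ)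
          ≤ ∑ i ∈ Finset.range (n-1), (f ((i:ℝ)+1) + 1) := by
        refine Finset.sum_le_sum fun i _ => ?_
        have := hclt (i+1)
        have h2 : f ((i+1:ℕ):ℝ) = f ((i:ℝ)+1) := by norm_num
        rw [← h2]
        linarith
      rw [Finset.sum_add_distrib, Finset.sum_const, Finset.card_range, nsmul_eq_mul,
        mul_one, hcast] at this
      exact this
    rw [hd2, hc0]
    have := hsum_upper
    have := hI_le
    linarith
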